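/- Let D be an integral domain and Θ ⊆ Spec(D) nonempty. For each P ∈ Θ let *_P be a spectral semistar operation on D_P defined by Δ_P ⊆ Spec(D_P), and suppose the family satisfies condition (↓): for every pair P ≠ P' in Θ, every prime Q of D with Q D_{P'} ∈ Δ_{P'} and Q contained in some prime of P^↓ := {H | H ⊆ P} satisfies Q D_P ∈ Δ_P. If every *_P is a.b., then the semistar operation ∧ on D defined by E^∧ := ∩{(E D_P)^{*_P} | P ∈ Θ} is a.b. -/

import Mathlib

open Pointwise

section Preamble

variable (D : Type*) [CommRing D] [IsDomain D]
variable (K : Type*) [Field K] [Algebra D K] [IsFractionRing D K]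

/-- The localization `D_P` of `D` at a prime `P`, as a subalgebra of the quotient field. -/
noncomputable def locAt (P : Ideal D) (hP : P.IsPrime) : Subalgebra D K :=
  Localization.subalgebra K P.primeCompl
    (fun x hx => mem_nonZeroDivisors_of_ne_zero (fun h0 : x = 0 => hx (h0 ▸ P.zero_mem)))

/-- `D_P` as a `D`-submodule of the quotient field. -/
noncomputable def locAtM (P : Ideal D) (hP : P.IsPrime) : Submodule D K :=
  Subalgebra.toSubmodule (locAt D K P hP)

variable {D K}

/-- `E` is finitely generated as a module over the subring corresponding to `Rm`. -/
def IsRFG (Rm E : Submodule D K) : Prop :=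
  ∃ F₀ : Submodule D K, F₀.FG ∧ F₀ ≠ ⊥ ∧ E = F₀ * Rm

/-- `s` is a semistar operation on the subring corresponding to `Rm`
(on `D` itself when `Rm = 1`): it is defined on the nonzero `Rm`-submodules of `K`. -/
def IsSemistar (Rm : Submodule D K) (s : Submodule D K → Submodule D K) : Prop :=
  (∀ E, E ≠ ⊥ → Rm * E ≤ E → Rm * s E ≤ s E) ∧
  (∀ (x : K) (E), x ≠ 0 → E ≠ ⊥ → Rm * E ≤ E → s (x • E) = x • s E) ∧
  (∀ E F, E ≠ ⊥ → F ≠ ⊥ → Rm * E ≤ E → Rm * F ≤ F → E ≤ F → s E ≤ s F) ∧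
  (∀ E, E ≠ ⊥ → Rm * E ≤ E → E ≤ s E) ∧
  (∀ E, E ≠ ⊥ → Rm * E ≤ E → s (s E) = s E)

/-- `s` is of finite type. -/
def IsFiniteType (Rm : Submodule D K) (s : Submodule D K → Submodule D K) : Prop :=
  ∀ E, E ≠ ⊥ → Rm * E ≤ E → s E = sSup {G | ∃ F, IsRFG Rm F ∧ F ≤ E ∧ G = s F}

/-- `s` is a.b. -/
def IsAB (Rm : Submodule D K) (s : Submodule D K → Submodule D K) : Prop :=
  ∀ F G H : Submodule D K, IsRFG Rm F → G ≠ ⊥ → Rm * G ≤ G → H ≠ ⊥ → Rm * H ≤ H →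
    s (F * G) ≤ s (F * H) → s G ≤ s H

/-- `s` is e.a.b. -/
def IsEAB (Rm : Submodule D K) (s : Submodule D K → Submodule D K) : Prop :=
  ∀ F G H : Submodule D K, IsRFG Rm F → IsRFG Rm G → IsRFG Rm H →
    s (F * G) ≤ s (F * H) → s G ≤ s H

/-- `s` is stable. -/
def IsStable (Rm : Submodule D K) (s : Submodule D K → Submodule D K) : Prop :=
  ∀ E F, E ≠ ⊥ → F ≠ ⊥ → Rm * E ≤ E → Rm * F ≤ F → s (E ⊓ F) = s E ⊓ s F

/-- The divisorial closure `E ↦ (R : (R : E))` over the subring corresponding to `Rm`. -/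
def vOp (Rm E : Submodule D K) : Submodule D K := Rm / (Rm / E)

/-- The `t`-operation over the subring corresponding to `Rm`. -/
def tOp (Rm E : Submodule D K) : Submodule D K :=
  sSup {G | ∃ F, IsRFG Rm F ∧ F ≤ E ∧ G = vOp Rm F}

end Preamble

variable {D : Type*} [CommRing D] [IsDomain D]
variable {K : Type*} [Field K] [Algebra D K] [IsFractionRing D K]


section Aux

variable {D : Type*} [CommRing D] [IsDomain D]
variable {K : Type*} [Field K] [Algebra D K] [IsFractionRing D K]

lemma one_le_locAtM (P : Ideal D) (hP : P.IsPrime) :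
    (1 : Submodule D K) ≤ locAtM D K P hP := by
  rw [Submodule.one_le]
  exact (locAt D K P hP).one_mem

lemma locAtM_mul_self (P : Ideal D) (hP : P.IsPrime) :
    (locAtM D K P hP) * (locAtM D K P hP) = locAtM D K P hP :=
  Subalgebra.isIdempotentElem_toSubmodule _

lemma le_mul_locAtM (E : Submodule D K) (P : Ideal D) (hP : P.IsPrime) :
    E ≤ E * locAtM D K P hP := by
  conv_lhs => rw [← mul_one E]
  exact mul_le_mul_right (one_le_locAtM P hP) _

end Aux

/-- if a family of spectral semistar operations `*_P` (`P ∈ Θ`) satisfies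
condition (↓) and every `*_P` is a.b., then the wedge operation
`E ↦ ∩ {(E D_P)^{*_P} | P ∈ Θ}` is a.b. on `D`. -/
theorem stmt16 (Θ : Set (PrimeSpectrum D)) (hne : Θ.Nonempty)
    (Δ : PrimeSpectrum D → Set (PrimeSpectrum D)) (hΔne : ∀ P ∈ Θ, (Δ P).Nonempty)
    (hΔ : ∀ P ∈ Θ, ∀ Q ∈ Δ P, Q.asIdeal ≤ P.asIdeal)
    (hdown : ∀ P ∈ Θ, ∀ P' ∈ Θ, P ≠ P' →
      ∀ Q ∈ Δ P', Q.asIdeal ≤ P.asIdeal → Q ∈ Δ P)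
    (hab : ∀ P ∈ Θ, IsAB (locAtM D K P.asIdeal P.isPrime)
      (fun E => ⨅ Q ∈ Δ P, E * locAtM D K Q.asIdeal Q.isPrime)) :
    IsAB (1 : Submodule D K) (fun E => ⨅ P ∈ Θ, ⨅ Q ∈ Δ P,
      (E * locAtM D K P.asIdeal P.isPrime) * locAtM D K Q.asIdeal Q.isPrime) := by
  intro F G H hF hG0 _ hH0 _ hle
  dsimp only at hle ⊢
  set L : PrimeSpectrum D → Submodule D K :=
    fun R => locAtM D K R.asIdeal R.isPrime with hL
  have hLself : ∀ R : PrimeSpectrum D, L R * L R = L R :=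
    fun R => locAtM_mul_self _ _
  have hEle : ∀ (E : Submodule D K) (R : PrimeSpectrum D), E ≤ E * L R :=
    fun E R => le_mul_locAtM _ _ _
  have hs : ∀ E : Submodule D K,
      E ≤ ⨅ P ∈ Θ, ⨅ Q ∈ Δ P, (E * L P) * L Q :=
    fun E => le_iInf fun P => le_iInf fun _ => le_iInf fun Q => le_iInf fun _ =>
      (hEle E P).trans (hEle _ Q)
  refine le_iInf fun P => le_iInf fun hP => ?_
  -- prepare hypotheses for the a.b. property at P
  have hmod : ∀ X : Submodule D K, L P * (X * L P) ≤ X * L P := fun X =>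
    le_of_eq (by rw [show L P * (X * L P) = X * (L P * L P) by ring, hLself])
  have hnb : ∀ X : Submodule D K, X ≠ ⊥ → X * L P ≠ ⊥ := fun X hX h =>
    hX (le_bot_iff.mp (h ▸ hEle X P))
  have hFG : (F * L P) * (G * L P) = (F * G) * L P := by
    rw [mul_mul_mul_comm, hLself]
  have hFH : (F * L P) * (H * L P) = (F * H) * L P := by
    rw [mul_mul_mul_comm, hLself]
  have hF' : IsRFG (L P) (F * L P) := by
    obtain ⟨F₀, hfg, hne, hFeq⟩ := hF
    exact ⟨F₀, hfg, hne, by rw [hFeq, mul_one]⟩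
  have harg : (⨅ Q ∈ Δ P, ((F * L P) * (G * L P)) * L Q) ≤
      ⨅ Q ∈ Δ P, ((F * L P) * (H * L P)) * L Q := by
    rw [hFG, hFH]
    calc ⨅ Q ∈ Δ P, ((F * G) * L P) * L Q
        ≤ ⨅ Q ∈ Δ P, ((⨅ P' ∈ Θ, ⨅ Q' ∈ Δ P', ((F * G) * L P') * L Q') * L P) * L Q :=
          iInf₂_mono fun Q _ =>
            mul_le_mul_left (mul_le_mul_left (hs (F * G)) _) _
      _ ≤ ⨅ Q ∈ Δ P, ((⨅ P' ∈ Θ, ⨅ Q' ∈ Δ P', ((F * H) * L P') * L Q') * L P) * L Q :=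
          iInf₂_mono fun Q _ =>
            mul_le_mul_left (mul_le_mul_left hle _) _
      _ ≤ ⨅ Q ∈ Δ P, ((F * H) * L P) * L Q := by
          refine le_iInf fun Q => le_iInf fun hQ => le_trans (iInf₂_le Q hQ) ?_
          have h1 : (⨅ P' ∈ Θ, ⨅ Q' ∈ Δ P', ((F * H) * L P') * L Q') ≤
              ((F * H) * L P) * L Q := (iInf₂_le P hP).trans (iInf₂_le Q hQ)
          calc ((⨅ P' ∈ Θ, ⨅ Q' ∈ Δ P', ((F * H) * L P') * L Q') * L P) * L Q
              ≤ ((((F * H) * L P) * L Q) * L P) * L Q :=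
                mul_le_mul_left (mul_le_mul_left h1 _) _
            _ = ((F * H) * L P) * L Q := by
                rw [show ((((F * H) * L P) * L Q) * L P) * L Q
                  = ((F * H) * (L P * L P)) * (L Q * L Q) by ring, hLself, hLself]
  have key := hab P hP (F * L P) (G * L P) (H * L P) hF'
    (hnb G hG0) (hmod G) (hnb H hH0) (hmod H) harg
  exact le_trans (iInf₂_le P hP) key
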